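/- Let p be a prime and a > b ≥ 1 integers such that p^b + 1 divides p^a + 1, and let d = (p^a + 1)/(p^b + 1). Then for every r ≥ 1 and every integer x with 1 ≤ x ≤ p^r - 2, 2·[d·x]_{p,r} ≤ 2·[x]_{p,r} + r(p-1), where [z]_{p,r} = r(p-1) if p^r - 1 divides z. -/

import Mathlib

/-- The sum of the base-`p` digits of the representative `y` of `z` mod `p^r - 1`
with `1 ≤ y ≤ p^r - 1`; by convention it is `r*(p-1)` when `p^r - 1 ∣ z`. -/
def brSum (p r : ℕ) (z : ℤ) : ℕ :=
  if ((p : ℤ) ^ r - 1) ∣ z then r * (p - 1)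
  else (Nat.digits p (z % ((p : ℤ) ^ r - 1)).toNat).sum

namespace BrAux


/-- digit sum -/
def S (p n : ℕ) : ℕ := (Nat.digits p n).sum

lemma S_zero (p : ℕ) : S p 0 = 0 := by simp [S]

lemma S_eq {p : ℕ} (hp : 1 < p) (n : ℕ) : S p n = n % p + S p (n / p) := by
  rcases Nat.eq_zero_or_pos n with h | h
  · simp [S, h]
  · conv_lhs => rw [S, Nat.digits_def' hp h]
    simp [S]

lemma S_lt {p : ℕ} (hp : 1 < p) {n : ℕ} (h : n < p) : S p n = n := by
  rw [S_eq hp, Nat.mod_eq_of_lt h, Nat.div_eq_of_lt h, S_zero]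
  omega

lemma S_add_le_aux {p : ℕ} (hp : 1 < p) :
    ∀ k, ∀ m n, m + n ≤ k → S p (m + n) ≤ S p m + S p n := by
  intro k
  induction k with
  | zero =>
      intro m n h
      have hm : m = 0 := by omega
      have hn : n = 0 := by omega
      subst hm; subst hn; simp
  | succ k ih =>
      intro m n h
      rcases Nat.eq_zero_or_pos (m + n) with h0 | h0
      · have hm : m = 0 := by omega
        have hn : n = 0 := by omega
        subst hm; subst hn; simp
      have hp0 : 0 < p := by omega
      obtain ⟨t, ht⟩ : ∃ t, t = m % p + n % p := ⟨_, rfl⟩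
      have hmp := Nat.mod_add_div m p
      have hnp := Nat.mod_add_div n p
      have htp := Nat.mod_add_div t p
      have hsum' : m + n = t % p + p * (t/p) + p * (m/p) + p * (n/p) := by
        have ht' : t = m % p + n % p := ht
        linarith
      have hsum : m + n = t % p + p * (t / p + m / p + n / p) := by
        have hd : p * (t / p + m / p + n / p) = p * (t/p) + p * (m/p) + p * (n/p) := by ring
        linarith
      have htlt : t % p < p := Nat.mod_lt _ hp0
      have hmod : (m + n) % p = t % p := by
        rw [hsum, Nat.add_mul_mod_self_left, Nat.mod_eq_of_lt htlt]
      have hdiv : (m + n) / p = m / p + t / p + n / p := by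
        rw [hsum, Nat.add_mul_div_left _ _ hp0, Nat.div_eq_of_lt htlt]
        omega
      have hq : 2 * (t / p) + 2 * (m / p) + 2 * (n / p) ≤ m + n := by
        have e1 : 2 * (t/p) ≤ p * (t/p) := Nat.mul_le_mul_right _ hp
        have e2 : 2 * (m/p) ≤ p * (m/p) := Nat.mul_le_mul_right _ hp
        have e3 : 2 * (n/p) ≤ p * (n/p) := Nat.mul_le_mul_right _ hp
        linarith [Nat.zero_le (t % p)]
      have hlt : m / p + t / p + n / p < m + n := by
        by_contra hcon
        push_neg at hcon
        linarith
      have e1 := ih (m / p + t / p) (n / p) (by linarith)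
      have e2 := ih (m / p) (t / p) (by linarith [Nat.zero_le (n / p)])
      have hstp : S p (t / p) = t / p := by
        refine S_lt hp ?_
        have h5 : p * (t/p) ≤ t := by linarith [Nat.zero_le (t % p)]
        have ht2 : t < 2 * p := by
          have := Nat.mod_lt m hp0
          have := Nat.mod_lt n hp0
          omega
        nlinarith
      have hSm := S_eq hp m
      have hSn := S_eq hp n
      have hfin : t / p ≤ p * (t / p) := Nat.le_mul_of_pos_left _ hp0
      rw [S_eq hp (m + n), hmod, hdiv]
      have ht' : t = m % p + n % p := ht
      linarith [Nat.zero_le (t % p), Nat.zero_le (t / p), Nat.zero_le (m / p), Nat.zero_le (n / p)]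

lemma S_add_le {p : ℕ} (hp : 1 < p) (m n : ℕ) : S p (m + n) ≤ S p m + S p n :=
  S_add_le_aux hp (m + n) m n le_rfl

lemma S_add_pow_mul {p : ℕ} (hp : 1 < p) :
    ∀ k a c, a < p ^ k → S p (a + p ^ k * c) = S p a + S p c := by
  intro k
  induction k with
  | zero =>
      intro a c h
      have ha : a = 0 := by simpa using h
      subst ha; simp [S_zero]
  | succ k ih =>
      intro a c h
      have hp0 : 0 < p := by omega
      rcases Nat.eq_zero_or_pos c with hc | hc
      · subst hc; simp [S_zero]
      have hap := Nat.mod_add_div a p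
      have hmodlt : a % p < p := Nat.mod_lt _ hp0
      have hform : a + p ^ (k+1) * c = a % p + p * (a / p + p ^ k * c) := by
        have hd : p * (a / p + p ^ k * c) = p * (a/p) + p ^ (k+1) * c := by ring
        omega
      have hmod : (a + p ^ (k+1) * c) % p = a % p := by
        rw [hform, Nat.add_mul_mod_self_left, Nat.mod_eq_of_lt hmodlt]
      have hdiv : (a + p ^ (k+1) * c) / p = a / p + p ^ k * c := by
        rw [hform, Nat.add_mul_div_left _ _ hp0, Nat.div_eq_of_lt hmodlt]
        omega
      have hap' : a / p < p ^ k := by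
        refine (Nat.div_lt_iff_lt_mul hp0).mpr ?_
        calc a < p ^ (k+1) := h
        _ = p ^ k * p := by ring
      rw [S_eq hp (a + p ^ (k+1) * c), hmod, hdiv, ih _ _ hap', S_eq hp a]
      ring

lemma S_pow_sub_one {p : ℕ} (hp : 1 < p) : ∀ r, S p (p ^ r - 1) = r * (p - 1) := by
  intro r
  induction r with
  | zero => simp [S_zero]
  | succ r ih =>
      have h1 : 1 ≤ p ^ r := Nat.one_le_pow _ _ (by omega)
      have h2 : p ^ (r+1) = p * p ^ r := by ring
      have h3 : 1 ≤ p ^ (r+1) := Nat.one_le_pow _ _ (by omega)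
      have hform : p ^ (r+1) - 1 = (p - 1) + p ^ 1 * (p ^ r - 1) := by
        zify [h1, h3, (by omega : 1 ≤ p)]
        ring
      rw [hform, S_add_pow_mul hp 1 _ _ (by simpa using Nat.sub_lt (by omega) one_pos), ih,
        S_lt hp (by omega)]
      have hsucc : (r+1) * (p-1) = r * (p - 1) + (p - 1) := by ring
      omega

lemma S_compl {p : ℕ} (hp : 1 < p) : ∀ r y, y < p ^ r → S p (p ^ r - 1 - y) + S p y = r * (p - 1) := by
  intro r
  induction r with
  | zero =>
      intro y hy
      have : y = 0 := by simpa using hy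
      subst this; simp [S_zero]
  | succ r ih =>
      intro y hy
      have hp0 : 0 < p := by omega
      have h1 : 1 ≤ p ^ r := Nat.one_le_pow _ _ hp0
      have h2 : p ^ (r+1) = p * p ^ r := by ring
      by_cases hend : y = p ^ (r+1) - 1
      · subst hend
        rw [Nat.sub_self, S_zero, S_pow_sub_one hp]
        omega
      · have hylt : y < p ^ (r+1) - 1 := by
          have h6 : 1 ≤ p ^ (r+1) := Nat.one_le_pow _ _ hp0
          omega
        have hyp : y / p < p ^ r := by
          refine (Nat.div_lt_iff_lt_mul hp0).mpr ?_
          calc y < p ^ (r+1) := hy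
          _ = p ^ r * p := by ring
        have hmodlt : y % p < p := Nat.mod_lt _ hp0
        have hyd := Nat.mod_add_div y p
        have hc3 : y % p ≤ p - 1 := by omega
        have hc4 : y / p ≤ p ^ r - 1 := by omega
        have hc5 : y ≤ p ^ (r+1) - 1 := by omega
        have hc6 : 1 ≤ p ^ (r+1) := Nat.one_le_pow _ _ hp0
        have hform : p ^ (r+1) - 1 - y = (p - 1 - y % p) + p * (p ^ r - 1 - y / p) := by
          zify [hc3, hc4, hc5, hc6, h1, (by omega : 1 ≤ p)]
          have hyd' := hyd
          zify at hyd'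
          linear_combination hyd'
        have hfl : p - 1 - y % p < p := lt_of_le_of_lt (Nat.sub_le _ _) (by omega)
        have hmod : ((p - 1 - y % p) + p * (p ^ r - 1 - y / p)) % p = p - 1 - y % p := by
          rw [Nat.add_mul_mod_self_left, Nat.mod_eq_of_lt hfl]
        have hdiv : ((p - 1 - y % p) + p * (p ^ r - 1 - y / p)) / p = p ^ r - 1 - y / p := by
          rw [Nat.add_mul_div_left _ _ hp0, Nat.div_eq_of_lt hfl, zero_add]
        have ihy := ih (y / p) hyp
        rw [hform, S_eq hp, hmod, hdiv, S_eq hp y]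
        have hsucc : (r+1) * (p-1) = r * (p - 1) + (p - 1) := by ring
        have h3 : (p - 1 - y % p) + y % p = p - 1 := by
          generalize y % p = B at hmodlt ⊢
          omega
        linarith [ihy, hsucc, h3]


/-- key bound for digit rotation -/
lemma rot_bound (p q s PR1 : ℤ) (hp : 2 ≤ p) (hP : 1 ≤ PR1) (hy : q * PR1 + s < p * PR1 - 1)
    (hs : s < PR1) (hq : q < p) : q + p * s < p * PR1 - 1 := by
  rcases eq_or_lt_of_le (by linarith : q + 1 ≤ p) with h | h
  · have hA : s + 1 < PR1 := by nlinarith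
    nlinarith
  · nlinarith [mul_le_mul_of_nonneg_left (by linarith : s + 1 ≤ PR1) (by linarith : (0:ℤ) ≤ p)]

lemma S_rot {p : ℕ} (hp : 1 < p) (r' : ℕ) {y : ℕ} (hy1 : 1 ≤ y) (hy2 : y < p ^ (r'+1) - 1) :
    S p ((p * y) % (p ^ (r'+1) - 1)) = S p y := by
  have hp0 : 0 < p := by omega
  have hP : 1 ≤ p ^ r' := Nat.one_le_pow _ _ hp0
  have hP1 : 1 ≤ p ^ (r'+1) := Nat.one_le_pow _ _ hp0
  obtain ⟨q, hq⟩ : ∃ q, q = y / p ^ r' := ⟨_, rfl⟩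
  obtain ⟨s, hs⟩ : ∃ s, s = y % p ^ r' := ⟨_, rfl⟩
  have hyds : s + p ^ r' * q = y := by rw [hq, hs]; exact Nat.mod_add_div _ _
  have hslt : s < p ^ r' := by rw [hs]; exact Nat.mod_lt _ (by omega)
  have hqlt : q < p := by
    rw [hq]
    refine (Nat.div_lt_iff_lt_mul (by omega)).mpr ?_
    calc y < p ^ (r'+1) - 1 := hy2
    _ ≤ p ^ (r'+1) := Nat.sub_le _ _
    _ = p * p ^ r' := by ring
  have hkey : q + p * s < p ^ (r'+1) - 1 := by
    have h1 : y + 1 < p ^ (r'+1) := by omega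
    have h1' : (y : ℤ) + 1 < (p:ℤ) ^ (r'+1) := by exact_mod_cast h1
    have hyds' : (s : ℤ) + (p:ℤ) ^ r' * (q:ℤ) = (y : ℤ) := by exact_mod_cast hyds
    have hslt' : (s : ℤ) < (p:ℤ) ^ r' := by exact_mod_cast hslt
    have hqlt' : (q : ℤ) < (p:ℤ) := by exact_mod_cast hqlt
    have hP' : (1 : ℤ) ≤ (p:ℤ) ^ r' := by exact_mod_cast hP
    have hb := rot_bound (p:ℤ) (q:ℤ) (s:ℤ) ((p:ℤ)^r') (by exact_mod_cast hp)
      hP' (by rw [pow_succ] at h1'; linarith) hslt' hqlt'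
    have hZ2 : ((q + p * s : ℕ) : ℤ) + 1 < ((p ^ (r'+1) : ℕ) : ℤ) := by
      push_cast
      rw [pow_succ]
      linarith
    have hfin : q + p * s + 1 < p ^ (r'+1) := by exact_mod_cast hZ2
    omega
  have hN1 : (p ^ (r'+1) - 1) + 1 = p ^ (r'+1) := Nat.succ_pred_eq_of_pos hP1
  have hform : p * y = (q + p * s) + (p ^ (r'+1) - 1) * q := by
    zify [hP1]
    have hyds' : (s : ℤ) + (p:ℤ) ^ r' * (q:ℤ) = (y : ℤ) := by exact_mod_cast hyds
    linear_combination (-(p:ℤ)) * hyds'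
  have hmod : (p * y) % (p ^ (r'+1) - 1) = q + p * s := by
    rw [hform, Nat.add_mul_mod_self_left, Nat.mod_eq_of_lt hkey]
  rw [hmod]
  have e1 : S p (q + p * s) = S p q + S p s := by
    have h := S_add_pow_mul hp 1 q s (by simpa using hqlt)
    simpa using h
  have e2 : S p y = S p s + S p q := by
    conv_lhs => rw [← hyds]
    exact S_add_pow_mul hp r' s q hslt
  rw [e1, e2, S_lt hp hqlt]
  omega

variable {p r : ℕ}

lemma brSum_of_dvd {z : ℤ} (h : ((p : ℤ) ^ r - 1) ∣ z) : brSum p r z = r * (p - 1) := by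
  simp only [brSum]; rw [if_pos h]

lemma brSum_of_not_dvd {z : ℤ} (h : ¬ ((p : ℤ) ^ r - 1) ∣ z) :
    brSum p r z = S p (z % ((p : ℤ) ^ r - 1)).toNat := by
  simp only [brSum]; rw [if_neg h]; rfl

lemma cast_pred_pow (hp : 1 < p) : ((p ^ r - 1 : ℕ) : ℤ) = (p : ℤ) ^ r - 1 := by
  have h1 : 1 ≤ p ^ r := Nat.one_le_pow _ _ (by omega)
  rw [Nat.cast_sub h1, Nat.cast_pow, Nat.cast_one]

lemma NZ_pos (hp : 1 < p) (hr : 1 ≤ r) : (0 : ℤ) < (p : ℤ) ^ r - 1 := by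
  have h1 : 2 ≤ p ^ r := Nat.one_lt_pow (by omega) hp
  have : (2 : ℤ) ≤ (p : ℤ) ^ r := by exact_mod_cast h1
  linarith

lemma rep_spec (hp : 1 < p) (hr : 1 ≤ r) {z : ℤ} (h : ¬ ((p : ℤ) ^ r - 1) ∣ z) :
    ((z % ((p : ℤ) ^ r - 1)).toNat : ℤ) = z % ((p : ℤ) ^ r - 1) ∧
      1 ≤ (z % ((p : ℤ) ^ r - 1)).toNat ∧ (z % ((p : ℤ) ^ r - 1)).toNat < p ^ r - 1 := by
  have hN := NZ_pos hp hr
  have h0 : 0 ≤ z % ((p : ℤ) ^ r - 1) := Int.emod_nonneg z (ne_of_gt hN)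
  have h1 : z % ((p : ℤ) ^ r - 1) < (p : ℤ) ^ r - 1 := Int.emod_lt_of_pos z hN
  have h2 : z % ((p : ℤ) ^ r - 1) ≠ 0 := fun hc => h (Int.dvd_of_emod_eq_zero hc)
  have h3 : ((z % ((p : ℤ) ^ r - 1)).toNat : ℤ) = z % ((p : ℤ) ^ r - 1) := Int.toNat_of_nonneg h0
  refine ⟨h3, by omega, ?_⟩
  have h4 := cast_pred_pow (r := r) hp
  omega

lemma coprime_NZ (hp : 1 < p) (hr : 1 ≤ r) : IsCoprime ((p : ℤ)) ((p : ℤ) ^ r - 1) := by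
  have hpos : 0 < p ^ r := Nat.pow_pos (by omega)
  have h2 : Nat.Coprime (p ^ r) (p ^ r - 1) := by
    have h3 : p ^ r = 1 + (p ^ r - 1) := by omega
    nth_rewrite 1 [h3]
    exact Nat.coprime_add_self_left.mpr (Nat.coprime_one_left _)
  have h1 : Nat.Coprime p (p ^ r - 1) :=
    Nat.Coprime.coprime_dvd_left (dvd_pow_self p (by omega)) h2
  rw [← cast_pred_pow hp]
  exact Int.isCoprime_iff_gcd_eq_one.mpr (by rw [Int.gcd_natCast_natCast]; exact h1)

lemma brSum_p_mul (hp : 1 < p) (hr : 1 ≤ r) (z : ℤ) :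
    brSum p r ((p : ℤ) * z) = brSum p r z := by
  have hcop := coprime_NZ hp hr
  by_cases hz : ((p : ℤ) ^ r - 1) ∣ z
  · rw [brSum_of_dvd (hz.mul_left _), brSum_of_dvd hz]
  · have hpz : ¬ ((p : ℤ) ^ r - 1) ∣ (p : ℤ) * z := fun hc => hz (hcop.symm.dvd_of_dvd_mul_left hc)
    rw [brSum_of_not_dvd hz, brSum_of_not_dvd hpz]
    obtain ⟨hcast, hy1, hy2⟩ := rep_spec hp hr hz
    obtain ⟨y, hy⟩ : ∃ y, y = (z % ((p : ℤ) ^ r - 1)).toNat := ⟨_, rfl⟩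
    rw [← hy] at hcast hy1 hy2 ⊢
    have hNc := cast_pred_pow (r := r) hp
    have hyltZ : (y : ℤ) < (p : ℤ) ^ r - 1 := by
      rw [hcast]; exact Int.emod_lt_of_pos z (NZ_pos hp hr)
    have e3 : (y : ℤ) % ((p : ℤ) ^ r - 1) = (y : ℤ) :=
      Int.emod_eq_of_lt (by positivity) hyltZ
    have hmodeq : ((p : ℤ) * z) % ((p : ℤ) ^ r - 1) = (((p * y) % (p ^ r - 1) : ℕ) : ℤ) := by
      rw [Int.mul_emod (p : ℤ) z, ← hcast, ← e3, ← Int.mul_emod]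
      rw [← hNc]
      push_cast
      ring_nf
    rw [hmodeq]
    obtain ⟨r', rfl⟩ : ∃ r', r = r' + 1 := ⟨r - 1, by omega⟩
    rw [Int.toNat_natCast]
    exact S_rot hp r' hy1 hy2

lemma brSum_pow_mul (hp : 1 < p) (hr : 1 ≤ r) (k : ℕ) (z : ℤ) :
    brSum p r ((p : ℤ) ^ k * z) = brSum p r z := by
  induction k with
  | zero => simp
  | succ k ih =>
      have : ((p : ℤ) ^ (k+1)) * z = (p : ℤ) * ((p : ℤ) ^ k * z) := by ring
      rw [this, brSum_p_mul hp hr, ih]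

lemma emod_add_neg_emod (hN : (0:ℤ) < N) {z : ℤ} (h : ¬ N ∣ z) :
    z % N + (-z) % N = N := by
  have h1 : 0 ≤ z % N := Int.emod_nonneg z (ne_of_gt hN)
  have h2 : z % N < N := Int.emod_lt_of_pos z hN
  have h1' : 0 ≤ (-z) % N := Int.emod_nonneg _ (ne_of_gt hN)
  have h2' : (-z) % N < N := Int.emod_lt_of_pos _ hN
  have hz : z % N ≠ 0 := fun hc => h (Int.dvd_of_emod_eq_zero hc)
  have hz' : (-z) % N ≠ 0 := by
    intro hc
    exact h ((Int.dvd_neg).mp (Int.dvd_of_emod_eq_zero hc))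
  have hd1 : N ∣ z - z % N := Int.dvd_self_sub_of_emod_eq rfl
  have hd2 : N ∣ (-z) - (-z) % N := Int.dvd_self_sub_of_emod_eq rfl
  have hd : N ∣ z % N + (-z) % N := by
    have : z % N + (-z) % N = -((z - z % N) + ((-z) - (-z) % N)) := by ring
    rw [this]
    exact (dvd_neg).mpr (dvd_add hd1 hd2)
  obtain ⟨k, hk⟩ := hd
  have hpos1 : 0 < z % N := lt_of_le_of_ne h1 (Ne.symm hz)
  have hpos2 : 0 < (-z) % N := lt_of_le_of_ne h1' (Ne.symm hz')
  have hk1 : 1 ≤ k := by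
    by_contra hcon
    push_neg at hcon
    nlinarith [mul_nonneg hN.le (by linarith : (0:ℤ) ≤ -k)]
  have hk2 : k < 2 := by
    by_contra hcon
    push_neg at hcon
    nlinarith [mul_le_mul_of_nonneg_left hcon hN.le]
  have : k = 1 := by omega
  rw [this, mul_one] at hk
  omega

lemma brSum_neg (hp : 1 < p) (hr : 1 ≤ r) {z : ℤ} (h : ¬ ((p : ℤ) ^ r - 1) ∣ z) :
    brSum p r z + brSum p r (-z) = r * (p - 1) := by
  have hN := NZ_pos hp hr
  have hneg : ¬ ((p : ℤ) ^ r - 1) ∣ (-z) := fun hc => h ((Int.dvd_neg).mp hc)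
  rw [brSum_of_not_dvd h, brSum_of_not_dvd hneg]
  obtain ⟨hc1, hy1, hy2⟩ := rep_spec hp hr h
  obtain ⟨hc1', hy1', hy2'⟩ := rep_spec hp hr hneg
  have hsum := emod_add_neg_emod hN h
  have hNc := cast_pred_pow (r := r) hp
  have hyy : (z % ((p : ℤ) ^ r - 1)).toNat + ((-z) % ((p : ℤ) ^ r - 1)).toNat = p ^ r - 1 := by
    omega
  have hcompl := S_compl hp r ((z % ((p : ℤ) ^ r - 1)).toNat) (by omega)
  have : ((-z) % ((p : ℤ) ^ r - 1)).toNat = p ^ r - 1 - (z % ((p : ℤ) ^ r - 1)).toNat := by omega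
  rw [this]
  omega

lemma brSum_add_le (hp : 1 < p) (hr : 1 ≤ r) (u v : ℤ) :
    brSum p r (u + v) ≤ brSum p r u + brSum p r v := by
  have hN := NZ_pos hp hr
  have hNc := cast_pred_pow (r := r) hp
  by_cases hu : ((p : ℤ) ^ r - 1) ∣ u
  · by_cases hv : ((p : ℤ) ^ r - 1) ∣ v
    · rw [brSum_of_dvd (dvd_add hu hv), brSum_of_dvd hu]
      exact Nat.le_add_right _ _
    · have huv : ¬ ((p : ℤ) ^ r - 1) ∣ (u + v) := by
        intro hc; exact hv (by simpa using dvd_sub hc hu)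
      rw [brSum_of_not_dvd huv, brSum_of_not_dvd hv, brSum_of_dvd hu]
      have : (u + v) % ((p : ℤ) ^ r - 1) = v % ((p : ℤ) ^ r - 1) := by
        rw [Int.add_emod, Int.emod_eq_zero_of_dvd hu, zero_add, Int.emod_emod_of_dvd _ dvd_rfl]
      rw [this]
      exact Nat.le_add_left _ _
  · by_cases hv : ((p : ℤ) ^ r - 1) ∣ v
    · have huv : ¬ ((p : ℤ) ^ r - 1) ∣ (u + v) := by
        intro hc; exact hu (by simpa using dvd_sub hc hv)
      rw [brSum_of_not_dvd huv, brSum_of_not_dvd hu, brSum_of_dvd hv]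
      have : (u + v) % ((p : ℤ) ^ r - 1) = u % ((p : ℤ) ^ r - 1) := by
        rw [Int.add_emod, Int.emod_eq_zero_of_dvd hv, add_zero, Int.emod_emod_of_dvd _ dvd_rfl]
      rw [this]
      exact Nat.le_add_right _ _
    · obtain ⟨hc1, hu1, hu2⟩ := rep_spec hp hr hu
      obtain ⟨hc2, hv1, hv2⟩ := rep_spec hp hr hv
      obtain ⟨yu, hyu⟩ : ∃ y, y = (u % ((p : ℤ) ^ r - 1)).toNat := ⟨_, rfl⟩
      obtain ⟨yv, hyv⟩ : ∃ y, y = (v % ((p : ℤ) ^ r - 1)).toNat := ⟨_, rfl⟩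
      rw [← hyu] at hc1 hu1 hu2
      rw [← hyv] at hc2 hv1 hv2
      have hmw : (u + v) % ((p : ℤ) ^ r - 1) = (((yu + yv) % (p ^ r - 1) : ℕ) : ℤ) := by
        rw [Int.add_emod, ← hc1, ← hc2]
        push_cast [← hNc]
        rfl
      by_cases huv : ((p : ℤ) ^ r - 1) ∣ (u + v)
      · rw [brSum_of_dvd huv, brSum_of_not_dvd hu, brSum_of_not_dvd hv, ← hyu, ← hyv]
        have hmod0 : (yu + yv) % (p ^ r - 1) = 0 := by
          have h0 : (u + v) % ((p : ℤ) ^ r - 1) = 0 := Int.emod_eq_zero_of_dvd huv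
          rw [hmw] at h0
          exact_mod_cast h0
        have hNn1 : 1 ≤ p ^ r - 1 := by
          have := NZ_pos hp hr
          omega
        have heq : yu + yv = p ^ r - 1 := by
          have hdd : (p ^ r - 1) ∣ (yu + yv) := Nat.dvd_of_mod_eq_zero hmod0
          obtain ⟨c, hcc⟩ := hdd
          have hc1' : 1 ≤ c := by
            rcases Nat.eq_zero_or_pos c with rfl | h
            · simp at hcc; omega
            · exact h
          have hc2' : c < 2 := by
            by_contra hcon
            push_neg at hcon
            have := Nat.mul_le_mul_left (p ^ r - 1) hcon
            omega
          have : c = 1 := by omega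
          rw [this, mul_one] at hcc
          exact hcc
        have hvv : yv = p ^ r - 1 - yu := by omega
        rw [hvv]
        have := S_compl hp r yu (by omega)
        omega
      · rw [brSum_of_not_dvd huv, brSum_of_not_dvd hu, brSum_of_not_dvd hv, ← hyu, ← hyv, hmw]
        rw [Int.toNat_natCast]
        have hNn1 : 1 ≤ p ^ r - 1 := by
          have := NZ_pos hp hr
          omega
        have hne : yu + yv ≠ p ^ r - 1 := by
          intro hc
          apply huv
          apply Int.dvd_of_emod_eq_zero
          rw [hmw, hc, Nat.mod_self, Nat.cast_zero]
        rcases Nat.lt_or_ge (yu + yv) (p ^ r - 1) with hlt | hge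
        · rw [Nat.mod_eq_of_lt hlt]
          exact S_add_le hp yu yv
        · have hm2 : yu + yv < 2 * (p ^ r - 1) := by omega
          have hmodval : (yu + yv) % (p ^ r - 1) = yu + yv - (p ^ r - 1) := by
            rw [Nat.mod_eq_sub_mod hge, Nat.mod_eq_of_lt (by omega)]
          rw [hmodval]
          obtain ⟨t, ht⟩ : ∃ t, t = yu + yv - p ^ r := ⟨_, rfl⟩
          have hge' : p ^ r ≤ yu + yv := by omega
          have htv : yu + yv - (p ^ r - 1) = t + 1 := by omega
          rw [htv]
          have htlt : t < p ^ r := by omega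
          have hS1 : S p 1 = 1 := S_lt hp hp
          have e3 : S p (t + p ^ r * 1) = S p t + S p 1 := S_add_pow_mul hp r t 1 htlt
          have e4 : t + p ^ r * 1 = yu + yv := by omega
          calc S p (t + 1) ≤ S p t + S p 1 := S_add_le hp t 1
          _ = S p (yu + yv) := by rw [← e3, e4]
          _ ≤ S p yu + S p yv := S_add_le hp yu yv

end BrAux

open BrAux in
theorem brSum_mul_le_of_quotient (p a b : ℕ) (hp : p.Prime) (hb : 1 ≤ b) (hab : b < a)
    (hdvd : (p ^ b + 1) ∣ (p ^ a + 1)) (d : ℕ) (hd : d = (p ^ a + 1) / (p ^ b + 1)) :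
    ∀ r : ℕ, 1 ≤ r → ∀ x : ℤ, 1 ≤ x → x ≤ (p : ℤ) ^ r - 2 →
      2 * brSum p r ((d : ℤ) * x) ≤ 2 * brSum p r x + r * (p - 1) := by
  intro r hr x hx1 hx2
  have hp1 : 1 < p := hp.one_lt
  have hDn : d * (p ^ b + 1) = p ^ a + 1 := by
    rw [hd]; exact Nat.div_mul_cancel hdvd
  have hDZ : (d : ℤ) * ((p : ℤ) ^ b + 1) = (p : ℤ) ^ a + 1 := by exact_mod_cast hDn
  have key : ((p : ℤ) ^ b + 1) * ((d : ℤ) * x) = ((p : ℤ) ^ a + 1) * x := by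
    linear_combination x * hDZ
  have chainA : brSum p r (((p : ℤ) ^ a + 1) * x) ≤ 2 * brSum p r x := by
    have h1 : ((p : ℤ) ^ a + 1) * x = (p : ℤ) ^ a * x + x := by ring
    rw [h1]
    calc brSum p r ((p : ℤ) ^ a * x + x) ≤ brSum p r ((p : ℤ) ^ a * x) + brSum p r x :=
        brSum_add_le hp1 hr _ _
    _ = brSum p r x + brSum p r x := by rw [brSum_pow_mul hp1 hr]
    _ = 2 * brSum p r x := by ring
  by_cases hz : ((p : ℤ) ^ r - 1) ∣ ((d : ℤ) * x)
  · have h2 : ((p : ℤ) ^ r - 1) ∣ (((p : ℤ) ^ a + 1) * x) := by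
      rw [← key]; exact hz.mul_left _
    rw [brSum_of_dvd hz]
    rw [brSum_of_dvd h2] at chainA
    omega
  · have hcop : IsCoprime ((p : ℤ) ^ b) ((p : ℤ) ^ r - 1) := (coprime_NZ hp1 hr).pow_left
    have hpbz : ¬ ((p : ℤ) ^ r - 1) ∣ ((p : ℤ) ^ b * ((d : ℤ) * x)) := fun hc =>
      hz (hcop.symm.dvd_of_dvd_mul_left hc)
    have e_rot : brSum p r ((p : ℤ) ^ b * ((d : ℤ) * x)) = brSum p r ((d : ℤ) * x) :=
      brSum_pow_mul hp1 hr b _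
    have e_neg := brSum_neg hp1 hr hpbz
    have e_sub : brSum p r ((d : ℤ) * x) ≤
        brSum p r ((p : ℤ) ^ b * ((d : ℤ) * x) + (d : ℤ) * x) +
          brSum p r (-((p : ℤ) ^ b * ((d : ℤ) * x))) := by
      have hrw : (d : ℤ) * x =
          ((p : ℤ) ^ b * ((d : ℤ) * x) + (d : ℤ) * x) + (-((p : ℤ) ^ b * ((d : ℤ) * x))) := by
        ring
      calc brSum p r ((d : ℤ) * x) = brSum p r (((p : ℤ) ^ b * ((d : ℤ) * x) + (d : ℤ) * x) +
          (-((p : ℤ) ^ b * ((d : ℤ) * x)))) := by rw [← hrw]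
      _ ≤ _ := brSum_add_le hp1 hr _ _
    have e_key : (p : ℤ) ^ b * ((d : ℤ) * x) + (d : ℤ) * x = ((p : ℤ) ^ a + 1) * x := by
      linear_combination x * hDZ
    rw [e_key] at e_sub
    omega
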